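/- Let r > 1, A ≥ 0 and a > 0 satisfy a^{r/(r−1)} = a + A. Then (a + A)^{1/r} ≥ A^{1/r} + 1/r. -/

import Mathlib

/-- If `r > 1`, `A ≥ 0` and `a > 0` satisfy `a^{r/(r−1)} = a + A`, then
`(a + A)^{1/r} ≥ A^{1/r} + 1/r`. -/
theorem stmt9 (r A a : ℝ) (hr : 1 < r) (hA : 0 ≤ A) (ha : 0 < a)
    (h : a ^ (r / (r - 1)) = a + A) :
    (a + A) ^ (1 / r) ≥ A ^ (1 / r) + 1 / r := by
  have hr0 : (0:ℝ) < r := lt_trans one_pos hr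
  have hr1 : (0:ℝ) < r - 1 := by linarith
  have hp1 : 1 < r / (r - 1) := by
    rw [lt_div_iff₀ hr1]; linarith
  -- a ≥ 1
  have ha1 : 1 ≤ a := by
    by_contra hlt
    push_neg at hlt
    have : a ^ (r / (r - 1)) < a ^ (1:ℝ) :=
      Real.rpow_lt_rpow_of_exponent_gt ha hlt hp1
    rw [Real.rpow_one] at this
    nlinarith [this, h]
  set t := a ^ ((r - 1)⁻¹) with ht
  have ht1 : 1 ≤ t := Real.one_le_rpow ha1 (le_of_lt (inv_pos.mpr hr1))
  have ht0 : 0 < t := lt_of_lt_of_le one_pos ht1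
  have hexp : r / (r - 1) = 1 + (r - 1)⁻¹ := by field_simp; ring
  have hat : a ^ (r / (r - 1)) = a * t := by
    rw [hexp, Real.rpow_add ha, Real.rpow_one]
  have hAe : A = a * (t - 1) := by
    have := h; rw [hat] at this; nlinarith [this]
  have hta : t ^ (r - 1) = a := Real.rpow_inv_rpow ha.le (ne_of_gt hr1)
  -- LHS equals t
  have hLHS : (a + A) ^ (1 / r) = t := by
    rw [← h, ← Real.rpow_mul ha.le, ht]
    congr 1
    field_simp
  -- A ^ (1/r) as a product
  have hArp : A ^ (1 / r) = t ^ ((r - 1) / r) * (t - 1) ^ (1 / r) := by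
    rw [hAe, ← hta, Real.mul_rpow (by positivity) (by linarith),
      ← Real.rpow_mul ht0.le]
    congr 2
    ring
  have hw : (r - 1) / r + 1 / r = 1 := by field_simp; ring
  have hgm : t ^ ((r - 1) / r) * (t - 1) ^ (1 / r) ≤
      (r - 1) / r * t + 1 / r * (t - 1) :=
    Real.geom_mean_le_arith_mean2_weighted (by positivity) (by positivity)
      ht0.le (by linarith) hw
  have hsum : (r - 1) / r * t + 1 / r * (t - 1) + 1 / r = t := by
    field_simp; ring
  rw [hLHS, hArp]
  linarith [hgm]
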